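/- Let p be a prime, H a cyclic group of order p generated by σ, and M an 𝔽_p[H]-module. Then M is a free 𝔽_p[H]-module if and only if M^H = (σ−1)^{p−1}·M, where M^H denotes the submodule of H-fixed elements. -/

import Mathlib

/-- The group algebra `𝔽_p[H]` for `H` the cyclic group of order `p`, generated by `σ`. -/
abbrev Sp (p : ℕ) : Type := MonoidAlgebra (ZMod p) (Multiplicative (ZMod p))

/-- The generator `σ` of the cyclic group `H`, as an element of the group algebra. -/
noncomputable def sigma (p : ℕ) : Sp p :=
  MonoidAlgebra.of (ZMod p) (Multiplicative (ZMod p)) (Multiplicative.ofAdd 1)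

section aux
variable (p : ℕ) [Fact p.Prime]

noncomputable def tau : Sp p := sigma p - 1

instance : CharP (Sp p) p := charP_of_injective_algebraMap' (ZMod p) (A := Sp p) p

lemma sigma_pow (n : ℕ) : sigma p ^ n = MonoidAlgebra.of (ZMod p) (Multiplicative (ZMod p))
    (Multiplicative.ofAdd (n : ZMod p)) := by
  rw [sigma, ← map_pow]
  congr 1
  rw [← ofAdd_nsmul, nsmul_eq_mul, mul_one]

lemma sigma_pow_p : sigma p ^ p = 1 := by
  rw [sigma_pow, ZMod.natCast_self]
  exact map_one _

lemma tau_pow_p : tau p ^ p = 0 := by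
  rw [tau, sub_pow_char, sigma_pow_p, one_pow, sub_self]

lemma tau_pow_of_le {n : ℕ} (hn : p ≤ n) : tau p ^ n = 0 := by
  rw [← Nat.add_sub_cancel' hn, pow_add, tau_pow_p, zero_mul]

lemma finrank_Sp : Module.finrank (ZMod p) (Sp p) = p := by
  have h : Module.finrank (ZMod p) (Multiplicative (ZMod p) →₀ ZMod p) = p := by
    rw [Module.finrank_finsupp_self]
    simp [ZMod.card]
  exact (MonoidAlgebra.coeffLinearEquiv (ZMod p)).finrank_eq.trans h

lemma top_le_span_tau : ⊤ ≤ Submodule.span (ZMod p)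
    (Set.range fun j : Fin p => tau p ^ (j : ℕ)) := by
  set S := Submodule.span (ZMod p) (Set.range fun j : Fin p => tau p ^ (j : ℕ)) with hS
  have htau : ∀ j : ℕ, tau p ^ j ∈ S := by
    intro j
    by_cases hj : j < p
    · exact Submodule.subset_span ⟨⟨j, hj⟩, rfl⟩
    · rw [tau_pow_of_le p (le_of_not_gt hj)]; exact S.zero_mem
  have hsig : ∀ k : ℕ, sigma p ^ k ∈ S := by
    intro k
    have : sigma p = tau p + 1 := by rw [tau]; ring
    rw [this, add_pow]
    refine Submodule.sum_mem _ fun m _ => ?_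
    rw [one_pow, mul_one, mul_comm, ← nsmul_eq_mul]
    exact nsmul_mem (htau m) _
  have hof : ∀ g : Multiplicative (ZMod p),
      MonoidAlgebra.of (ZMod p) (Multiplicative (ZMod p)) g ∈ S := by
    intro g
    have := hsig (Multiplicative.toAdd g).val
    rwa [sigma_pow, ZMod.natCast_val, ZMod.cast_id', id_eq, ofAdd_toAdd] at this
  intro x _
  have hx : x = ∑ g, (MonoidAlgebra.basis (Multiplicative (ZMod p)) (ZMod p)).repr x g
      • MonoidAlgebra.of (ZMod p) _ g := by
    conv_lhs => rw [← (MonoidAlgebra.basis (Multiplicative (ZMod p)) (ZMod p)).sum_repr x]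
    simp only [MonoidAlgebra.basis_apply, MonoidAlgebra.of_apply]
  rw [hx]
  exact Submodule.sum_mem _ fun g _ => S.smul_mem _ (hof g)

noncomputable def tauBasis : Module.Basis (Fin p) (ZMod p) (Sp p) :=
  basisOfTopLeSpanOfCardEqFinrank (fun j : Fin p => tau p ^ (j : ℕ)) (top_le_span_tau p)
    (by simp [finrank_Sp])

lemma tauBasis_apply (j : Fin p) : tauBasis p j = tau p ^ (j : ℕ) := by
  rw [tauBasis, coe_basisOfTopLeSpanOfCardEqFinrank]

lemma tau_ann (x : Sp p) (h : tau p * x = 0) :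
    x = ((tauBasis p).repr x ⟨p - 1, by have := (Fact.out : p.Prime).pos; omega⟩)
      • tau p ^ (p - 1) := by
  have hp : 0 < p := (Fact.out : p.Prime).pos
  obtain ⟨q, hq⟩ : ∃ q, p = q + 1 := ⟨p - 1, by omega⟩
  subst hq
  simp only [Nat.add_sub_cancel]
  set b := tauBasis (q + 1) with hb
  set c : ℕ → ZMod (q + 1) := fun i => if h : i < q + 1 then b.repr x ⟨i, h⟩ else 0 with hc
  have hx : x = ∑ i ∈ Finset.range (q + 1), c i • tau (q + 1) ^ i := by
    have h1 := Module.Basis.sum_equivFun b x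
    have h2 : ∀ j : Fin (q + 1), b.equivFun x j • b j = c (j : ℕ) • tau (q + 1) ^ (j : ℕ) := by
      intro j
      rw [Module.Basis.equivFun_apply, hb, tauBasis_apply, hc]
      simp [j.isLt]
      rw [hb]
    rw [← h1, Finset.sum_congr rfl fun j _ => h2 j,
      Fin.sum_univ_eq_sum_range (fun i => c i • tau (q + 1) ^ i) (q + 1)]
  have h0 : ∑ i ∈ Finset.range q, c i • tau (q + 1) ^ (i + 1) = 0 := by
    have h3 : tau (q + 1) * x = ∑ i ∈ Finset.range (q + 1), c i • tau (q + 1) ^ (i + 1) := by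
      rw [hx, Finset.mul_sum]
      refine Finset.sum_congr rfl fun i _ => ?_
      rw [mul_smul_comm, ← pow_succ']
    rw [Finset.sum_range_succ] at h3
    have h4 : c q • tau (q + 1) ^ (q + 1) = 0 := by rw [tau_pow_p, smul_zero]
    rw [h4, add_zero] at h3
    rw [← h3, h]
  set e : Fin (q + 1) → ZMod (q + 1) := fun j => if (j : ℕ) = 0 then 0 else c ((j : ℕ) - 1)
    with he
  have hesum : ∑ j : Fin (q + 1), e j • b j = 0 := by
    have h5 : ∀ j : Fin (q + 1), e j • b j
        = (if (j : ℕ) = 0 then 0 else c ((j : ℕ) - 1)) • tau (q + 1) ^ (j : ℕ) := by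
      intro j; rw [he, hb, tauBasis_apply]
    rw [Finset.sum_congr rfl fun j _ => h5 j,
      Fin.sum_univ_eq_sum_range
        (fun i => (if i = 0 then 0 else c (i - 1)) • tau (q + 1) ^ i) (q + 1),
      Finset.sum_range_succ']
    simp only [if_pos rfl, zero_smul, add_zero, Nat.succ_ne_zero, if_neg, Nat.add_sub_cancel]
    simpa using h0
  have hez : ∀ j, e j = 0 := by
    have li := b.linearIndependent
    rw [Fintype.linearIndependent_iff] at li
    exact li e hesum
  have hcz : ∀ i, i < q → c i = 0 := by
    intro i hi
    have := hez ⟨i + 1, by omega⟩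
    simpa [he] using this
  have hxq : x = c q • tau (q + 1) ^ q := by
    rw [hx, Finset.sum_range_succ, Finset.sum_eq_zero (fun i hi => by
      rw [hcz i (Finset.mem_range.mp hi), zero_smul]), zero_add]
  have hcoef : c q = b.repr x ⟨q, by omega⟩ := by
    rw [hc]
    simp only [dif_pos (by omega : q < q + 1)]
  rw [← hcoef]
  exact hxq

variable {p}

lemma cond_of_free (M : Type*) [AddCommGroup M] [Module (Sp p) M] [Module.Free (Sp p) M]
    (m : M) (h : tau p • m = 0) : ∃ m', m = tau p ^ (p - 1) • m' := by
  have hp : 0 < p := (Fact.out : p.Prime).pos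
  set e := Module.Free.chooseBasis (Sp p) M with he
  set r := e.repr m with hr
  have hsm : tau p • r = 0 := by rw [hr, ← map_smul, h, map_zero]
  have hri : ∀ i, tau p * r i = 0 := by
    intro i
    have := congrArg (fun f => f i) hsm
    simpa using this
  set f : Sp p → Sp p :=
    fun x => algebraMap (ZMod p) (Sp p) ((tauBasis p).repr x ⟨p - 1, by omega⟩) with hfdef
  have hf0 : f 0 = 0 := by simp [hfdef]
  set y := Finsupp.mapRange f hf0 r with hy
  have hty : tau p ^ (p - 1) • y = r := by
    ext i
    rw [Finsupp.smul_apply, hy, Finsupp.mapRange_apply, smul_eq_mul, hfdef]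
    conv_rhs => rw [tau_ann p (r i) (hri i)]
    rw [Algebra.smul_def, mul_comm]
  refine ⟨e.repr.symm y, ?_⟩
  calc m = e.repr.symm (e.repr m) := (e.repr.symm_apply_apply m).symm
    _ = e.repr.symm (tau p ^ (p - 1) • y) := by rw [← hr, hty]
    _ = tau p ^ (p - 1) • e.repr.symm y := map_smul _ _ _

lemma tau_mul_high (k : ℕ) (hk : k < p) (z : Sp p)
    (hz : ∀ j : Fin p, (j : ℕ) < k → (tauBasis p).repr z j = 0) :
    tau p ^ (p - 1 - k) * z = ((tauBasis p).repr z ⟨k, hk⟩) • tau p ^ (p - 1) := by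
  conv_lhs => rw [← Module.Basis.sum_equivFun (tauBasis p) z]
  rw [Finset.mul_sum, Finset.sum_eq_single (⟨k, hk⟩ : Fin p)]
  · rw [Module.Basis.equivFun_apply, tauBasis_apply, mul_smul_comm, ← pow_add,
      show p - 1 - k + ((⟨k, hk⟩ : Fin p) : ℕ) = p - 1 from by simp only [Fin.val_mk]; omega]
  · intro j _ hne
    rcases lt_or_gt_of_ne (fun hh : (j : ℕ) = k => hne (Fin.ext hh)) with hlt | hgt
    · rw [Module.Basis.equivFun_apply, hz j hlt, zero_smul, mul_zero]
    · rw [tauBasis_apply, mul_smul_comm, ← pow_add,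
        tau_pow_of_le p (by omega : p ≤ p - 1 - k + (j : ℕ)), smul_zero]
  · intro hmem
    exact absurd (Finset.mem_univ _) hmem

lemma free_of_cond (M : Type*) [AddCommGroup M] [Module (Sp p) M]
    [Module (ZMod p) M] [IsScalarTower (ZMod p) (Sp p) M]
    (h : ∀ m : M, tau p • m = 0 → ∃ m', m = tau p ^ (p - 1) • m') :
    Module.Free (Sp p) M := by
  classical
  have hp : 0 < p := (Fact.out : p.Prime).pos
  haveI : SMulCommClass (Sp p) (ZMod p) M := SMulCommClass.symm _ _ _
  have hz : ∀ (c : ZMod p) (x : M), c • x = algebraMap (ZMod p) (Sp p) c • x := by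
    intro c x
    rw [Algebra.algebraMap_eq_smul_one, smul_assoc, one_smul]
  set T : M →ₗ[ZMod p] M :=
    (LinearMap.lsmul (Sp p) M (tau p ^ (p - 1))).restrictScalars (ZMod p) with hT
  set W := LinearMap.range T with hW
  set w : Module.Basis (Module.Basis.ofVectorSpaceIndex (ZMod p) W) (ZMod p) W :=
    Module.Basis.ofVectorSpace (ZMod p) W with hw
  have hmex : ∀ i, ∃ mi : M, tau p ^ (p - 1) • mi = (w i : M) := by
    intro i
    obtain ⟨mi, hmi⟩ := (w i).2
    exact ⟨mi, hmi⟩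
  choose mfun hmfun using hmex
  set φ := Finsupp.linearCombination (Sp p) mfun with hφ
  -- surjectivity
  have key : ∀ k, k ≤ p → ∀ m : M, tau p ^ k • m = 0 → m ∈ LinearMap.range φ := by
    intro k
    induction k with
    | zero =>
      intro _ m hm
      rw [pow_zero, one_smul] at hm
      rw [hm]
      exact zero_mem _
    | succ k ih =>
      intro hk m hm
      have h1 : tau p • (tau p ^ k • m) = 0 := by
        rw [smul_smul, ← pow_succ']
        exact hm
      obtain ⟨u, hu⟩ := h (tau p ^ k • m) h1
      have hWmem : tau p ^ k • m ∈ W := ⟨u, hu.symm⟩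
      set el : W := ⟨tau p ^ k • m, hWmem⟩ with hel0
      set cf := w.repr el with hcf
      have hel : (el : M) = ∑ i ∈ cf.support, cf i • ((w i : M)) := by
        calc (el : M) = W.subtype ((Finsupp.linearCombination (ZMod p) w) cf) := by
              rw [hcf, w.linearCombination_repr]
              rfl
          _ = ∑ i ∈ cf.support, cf i • (w i : M) := by
              rw [Finsupp.linearCombination_apply, Finsupp.sum, map_sum]
              simp
      set m' : M := ∑ i ∈ cf.support, cf i • (tau p ^ (p - 1 - k) • mfun i) with hm'0
      have hm' : tau p ^ k • m' = tau p ^ k • m := by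
        rw [hm'0, Finset.smul_sum]
        have hterm : ∀ i ∈ cf.support,
            tau p ^ k • (cf i • (tau p ^ (p - 1 - k) • mfun i)) = cf i • (w i : M) := by
          intro i _
          rw [smul_comm (tau p ^ k) (cf i), smul_smul, ← pow_add,
            (by omega : k + (p - 1 - k) = p - 1), hmfun]
        rw [Finset.sum_congr rfl hterm, ← hel]
      have hd : tau p ^ k • (m - m') = 0 := by rw [smul_sub, hm', sub_self]
      have hmem' : m' ∈ LinearMap.range φ := by
        apply Submodule.sum_mem
        intro i _
        rw [hz (cf i)]
        refine Submodule.smul_mem _ _ (Submodule.smul_mem _ _ ?_)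
        exact ⟨Finsupp.single i 1, by rw [hφ, Finsupp.linearCombination_single, one_smul]⟩
      have hmm : m - m' ∈ LinearMap.range φ := ih (by omega) (m - m') hd
      have : m = (m - m') + m' := by abel
      rw [this]
      exact add_mem hmm hmem'
  have hsurj : Function.Surjective φ := by
    intro m
    exact key p le_rfl m (by rw [tau_pow_p, zero_smul])
  -- injectivity
  have hinj0 : ∀ x, φ x = 0 → x = 0 := by
    intro x hx
    by_contra hxne
    set b := tauBasis p with hb
    haveI : DecidablePred (fun j => ∃ hj : j < p, ∃ i, b.repr (x i) ⟨j, hj⟩ ≠ 0) :=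
      Classical.decPred _
    have hex : ∃ j, ∃ hj : j < p, ∃ i, b.repr (x i) ⟨j, hj⟩ ≠ 0 := by
      obtain ⟨i0, hi0⟩ := Finsupp.ne_iff.mp hxne
      rw [Finsupp.coe_zero, Pi.zero_apply] at hi0
      have hr : b.repr (x i0) ≠ 0 := by
        intro hh
        exact hi0 (by simpa using congrArg b.repr.symm hh)
      obtain ⟨j0, hj0⟩ := Finsupp.ne_iff.mp hr
      rw [Finsupp.coe_zero, Pi.zero_apply] at hj0
      exact ⟨(j0 : ℕ), j0.isLt, i0, by simpa using hj0⟩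
    set k := Nat.find hex with hkdef
    obtain ⟨hkp, i0, hi0⟩ := Nat.find_spec hex
    have hmin : ∀ j (hjp : j < p), j < k → ∀ i, b.repr (x i) ⟨j, hjp⟩ = 0 := by
      intro j hjp hjk i
      by_contra hne
      exact Nat.find_min hex hjk ⟨hjp, i, hne⟩
    have h0 : φ (tau p ^ (p - 1 - k) • x) = 0 := by rw [map_smul, hx, smul_zero]
    rw [hφ, Finsupp.linearCombination_apply,
      Finsupp.sum_of_support_subset (tau p ^ (p - 1 - k) • x) Finsupp.support_smul
        (fun i a => a • mfun i) (fun i _ => zero_smul _ _)] at h0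
    have hterm : ∀ i, (tau p ^ (p - 1 - k) • x) i • mfun i
        = b.repr (x i) ⟨k, hkp⟩ • (w i : M) := by
      intro i
      rw [Finsupp.smul_apply, smul_eq_mul,
        tau_mul_high k hkp (x i) (fun j hj => hmin (j : ℕ) j.isLt hj i),
        smul_assoc, hmfun]
    rw [Finset.sum_congr rfl (fun i _ => hterm i)] at h0
    have liW : LinearIndependent (ZMod p) (fun i => (w i : M)) :=
      w.linearIndependent.map' W.subtype (Submodule.ker_subtype W)
    have hi0mem : i0 ∈ x.support := by
      rw [Finsupp.mem_support_iff]
      intro hh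
      apply hi0
      rw [hh, map_zero]
      rfl
    exact hi0 (linearIndependent_iff'.mp liW x.support
      (fun i => b.repr (x i) ⟨k, hkp⟩) h0 i0 hi0mem)
  have hinj : Function.Injective φ :=
    LinearMap.ker_eq_bot.mp (LinearMap.ker_eq_bot'.mpr hinj0)
  exact Module.Free.of_equiv (LinearEquiv.ofBijective φ ⟨hinj, hsurj⟩)

end aux

/-- `M` is a free `𝔽_p[ℤ/pℤ]`-module iff `M^H = (σ-1)^(p-1) M`. -/
theorem stmt3 (p : ℕ) [Fact p.Prime] (M : Type*) [AddCommGroup M] [Module (Sp p) M] :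
    Module.Free (Sp p) M ↔
      {m : M | sigma p • m = m} = Set.range (fun m : M => (sigma p - 1) ^ (p - 1) • m) := by
  have hp : 0 < p := (Fact.out : p.Prime).pos
  have htau : sigma p - 1 = tau p := rfl
  constructor
  · intro hfree
    ext m
    simp only [Set.mem_setOf_eq, Set.mem_range, htau]
    constructor
    · intro hm
      have ht : tau p • m = 0 := by rw [← htau, sub_smul, one_smul, hm, sub_self]
      obtain ⟨m', hm'⟩ := cond_of_free M m ht
      exact ⟨m', hm'.symm⟩
    · rintro ⟨m', rfl⟩
      have h1 : tau p • (tau p ^ (p - 1) • m') = 0 := by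
        rw [smul_smul, ← pow_succ', (show p - 1 + 1 = p by omega), tau_pow_p, zero_smul]
      rw [← htau, sub_smul, one_smul, sub_eq_zero] at h1
      exact h1
  · intro hset
    letI : Module (ZMod p) M := Module.compHom M (algebraMap (ZMod p) (Sp p))
    letI : IsScalarTower (ZMod p) (Sp p) M := ⟨fun c r m => by
      show (c • r) • m = algebraMap (ZMod p) (Sp p) c • (r • m)
      rw [Algebra.smul_def, mul_smul]⟩
    apply free_of_cond M
    intro m hm
    have h1 : sigma p • m = m := by
      have h2 : (sigma p - 1) • m = 0 := by rw [htau]; exact hm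
      rw [sub_smul, one_smul, sub_eq_zero] at h2
      exact h2
    have h2 : m ∈ {m : M | sigma p • m = m} := h1
    rw [hset] at h2
    obtain ⟨m', hm'⟩ := h2
    exact ⟨m', by rw [← hm', htau]⟩
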